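/- Let $\ket{\phi_1},\dots,\ket{\phi_m},\ket{\psi}$ be unit vectors in a finite-dimensional complex Hilbert space with $|\langle\psi|\phi_i\rangle| \le 1/(5m)$ for all $i$ and $|\langle\phi_i|\phi_j\rangle| \le 1/(5m)$ for all $i\ne j$. Let $\Pi$ be the orthogonal projection onto the span of $\phi_1,\dots,\phi_m$. Then $\langle\psi|\Pi|\psi\rangle \le 0.1$. -/

import Mathlib

open Finset ComplexConjugate

set_option maxHeartbeats 1000000 in
theorem stmt_10 {E : Type*} [NormedAddCommGroup E] [InnerProductSpace ℂ E]
    [FiniteDimensional ℂ E] (m : ℕ) (hm : 1 ≤ m)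
    (φ : Fin m → E) (ψ : E)
    (hφ : ∀ i, ‖φ i‖ = 1) (hψ : ‖ψ‖ = 1)
    (hψφ : ∀ i, ‖(inner ℂ ψ (φ i) : ℂ)‖ ≤ 1 / (5 * m))
    (hφφ : ∀ i j, i ≠ j → ‖(inner ℂ (φ i) (φ j) : ℂ)‖ ≤ 1 / (5 * m)) :
    ‖(Submodule.orthogonalProjectionOnto (Submodule.span ℂ (Set.range φ)) ψ : E)‖ ^ 2 ≤ 0.1 := by
  set K := Submodule.span ℂ (Set.range φ) with hK
  set P : E := (Submodule.orthogonalProjectionOnto K ψ : E) with hPdef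
  have hPK : P ∈ K := SetLike.coe_mem _
  obtain ⟨c, hc⟩ := (Submodule.mem_span_range_iff_exists_fun ℂ).mp hPK
  set s : ℝ := ∑ i, ‖c i‖ with hsdef
  set q : ℝ := ∑ i, ‖c i‖ ^ 2 with hqdef
  set M : ℝ := (m : ℝ) with hMdef
  have hM1 : (1:ℝ) ≤ M := by rw [hMdef]; exact_mod_cast hm
  have hM0 : (0:ℝ) < M := by linarith
  have hs0 : 0 ≤ s := Finset.sum_nonneg fun i _ => norm_nonneg _
  have hq0 : 0 ≤ q := Finset.sum_nonneg fun i _ => sq_nonneg _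
  set t2 : ℝ := ‖P‖ ^ 2 with ht2def
  have ht20 : 0 ≤ t2 := sq_nonneg _
  -- inner ℂ P ψ = inner ℂ P P
  have h0 : (inner ℂ P (ψ - P) : ℂ) = 0 :=
    (Submodule.mem_orthogonal K _).mp (Submodule.sub_starProjection_mem_orthogonal (K := K) ψ) P hPK
  rw [inner_sub_right] at h0
  have h1 : (inner ℂ P ψ : ℂ) = inner ℂ P P := sub_eq_zero.mp h0
  have hPP : (inner ℂ P P : ℂ) = ((‖P‖:ℝ)^2 : ℂ) := by
    rw [inner_self_eq_norm_sq_to_K]; norm_num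
  have h2 : (inner ℂ ψ P : ℂ) = ((t2 : ℝ) : ℂ) := by
    rw [← inner_conj_symm, h1, hPP]
    simp [ht2def]
  -- expansion of inner ℂ ψ P
  have hexp : (inner ℂ ψ P : ℂ) = ∑ i, c i * inner ℂ ψ (φ i) := by
    rw [← hc, inner_sum]
    simp [inner_smul_right]
  -- bound 1 : t2 ≤ s / (5 M)
  have hb1 : t2 ≤ s / (5 * M) := by
    have hnn : t2 = ‖(inner ℂ ψ P : ℂ)‖ := by rw [h2]; simp [abs_of_nonneg ht20]
    rw [hnn, hexp]
    calc ‖∑ i, c i * inner ℂ ψ (φ i)‖ ≤ ∑ i, ‖c i * (inner ℂ ψ (φ i) : ℂ)‖ := norm_sum_le _ _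
      _ ≤ ∑ i, ‖c i‖ * (1 / (5 * M)) := by
          refine Finset.sum_le_sum fun i _ => ?_
          rw [norm_mul]
          exact mul_le_mul_of_nonneg_left (hψφ i) (norm_nonneg _)
      _ = s * (1 / (5 * M)) := by rw [← Finset.sum_mul]
      _ = s / (5 * M) := by ring
  -- expansion of inner ℂ P P
  have hPP2 : (inner ℂ P P : ℂ) = ∑ i, ∑ j, conj (c i) * c j * inner ℂ (φ i) (φ j) := by
    rw [← hc, sum_inner]
    congr 1; ext i
    rw [inner_smul_left, inner_sum]
    rw [Finset.mul_sum]
    congr 1; ext j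
    rw [inner_smul_right]; ring
  set S : ℂ := ∑ i, ∑ j ∈ Finset.univ.erase i, conj (c i) * c j * inner ℂ (φ i) (φ j) with hSdef
  have hsplit : (inner ℂ P P : ℂ) = (q : ℂ) + S := by
    rw [hPP2, hqdef, hSdef]
    push_cast
    rw [← Finset.sum_add_distrib]
    refine Finset.sum_congr rfl fun i _ => ?_
    rw [← Finset.add_sum_erase _ _ (Finset.mem_univ i)]
    congr 1
    have : (inner ℂ (φ i) (φ i) : ℂ) = 1 := by
      rw [inner_self_eq_norm_sq_to_K, hφ i]; norm_num
    rw [this, mul_one, RCLike.conj_mul]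
    norm_num
  have hSval : S = ((t2 - q : ℝ) : ℂ) := by
    have h := hsplit
    rw [hPP] at h
    rw [ht2def]
    push_cast
    linear_combination -h
  have hSnorm : ‖S‖ ≤ s ^ 2 / (5 * M) := by
    calc ‖S‖ ≤ ∑ i, ‖∑ j ∈ Finset.univ.erase i, conj (c i) * c j * inner ℂ (φ i) (φ j)‖ :=
          norm_sum_le _ _
      _ ≤ ∑ i, ∑ j ∈ Finset.univ.erase i, ‖conj (c i) * c j * (inner ℂ (φ i) (φ j) : ℂ)‖ :=
          Finset.sum_le_sum fun i _ => norm_sum_le _ _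
      _ ≤ ∑ i, ∑ j ∈ Finset.univ.erase i, ‖c i‖ * ‖c j‖ * (1 / (5 * M)) := by
          refine Finset.sum_le_sum fun i _ => Finset.sum_le_sum fun j hj => ?_
          rw [norm_mul, norm_mul, RCLike.norm_conj]
          exact mul_le_mul_of_nonneg_left (hφφ i j (Finset.ne_of_mem_erase hj).symm)
            (mul_nonneg (norm_nonneg _) (norm_nonneg _))
      _ ≤ ∑ i, ∑ j, ‖c i‖ * ‖c j‖ * (1 / (5 * M)) := by
          refine Finset.sum_le_sum fun i _ => ?_
          refine Finset.sum_le_sum_of_subset_of_nonneg (Finset.erase_subset _ _) fun j _ _ => ?_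
          positivity
      _ = s ^ 2 / (5 * M) := by
          rw [hsdef, sq, Finset.sum_mul]
          rw [Finset.sum_div]
          refine Finset.sum_congr rfl fun i _ => ?_
          rw [Finset.mul_sum, Finset.sum_div]
          refine Finset.sum_congr rfl fun j _ => ?_
          ring
  -- q ≤ t2 + s^2/(5M)
  have hb2 : q ≤ t2 + s ^ 2 / (5 * M) := by
    have h : q - t2 ≤ ‖S‖ := by
      rw [hSval]
      rw [Complex.norm_real]
      calc q - t2 ≤ |t2 - q| := by rw [abs_sub_comm]; exact le_abs_self _
        _ = ‖(t2 - q : ℝ)‖ := (Real.norm_eq_abs _).symm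
    linarith [le_trans h hSnorm]
  -- Cauchy-Schwarz : s^2 ≤ M * q
  have hb3 : s ^ 2 ≤ M * q := by
    have := Finset.sum_mul_sq_le_sq_mul_sq Finset.univ (fun _ : Fin m => (1:ℝ))
      (fun i => ‖c i‖)
    simp only [one_mul, one_pow] at this
    have hcard : ∑ _i : Fin m, (1:ℝ) = M := by simp [hMdef]
    calc s ^ 2 = (∑ i, ‖c i‖) ^ 2 := by rw [hsdef]
      _ ≤ (∑ _i : Fin m, (1:ℝ)) * ∑ i, ‖c i‖ ^ 2 := this
      _ = M * q := by rw [hcard, hqdef]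
  -- final arithmetic
  have hb1' : 5 * M * t2 ≤ s := by
    have h := (le_div_iff₀ (by positivity : (0:ℝ) < 5 * M)).mp hb1
    linarith
  have h3 : 25 * M ^ 2 * t2 ^ 2 ≤ M * q := by
    nlinarith [mul_self_le_mul_self (by positivity : (0:ℝ) ≤ 5 * M * t2) hb1', hb3]
  have h4 : 25 * M * t2 ^ 2 ≤ q := by nlinarith [h3, hM0]
  have h5 : 4 * q ≤ 5 * t2 := by
    have hq5 : 5 * M * q ≤ 5 * M * t2 + s ^ 2 := by
      have h := mul_le_mul_of_nonneg_left hb2 (by positivity : (0:ℝ) ≤ 5 * M)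
      have heq : 5 * M * (t2 + s ^ 2 / (5 * M)) = 5 * M * t2 + s ^ 2 := by field_simp
      linarith [heq ▸ h]
    nlinarith [hq5, hb3, hM0]
  show t2 ≤ 0.1
  nlinarith [h4, h5, hM1, ht20, sq_nonneg t2,
    mul_nonneg (sub_nonneg.mpr hM1) (sq_nonneg t2)]
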